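/- A Polish group G is non-archimedean if and only if there exists an injective group homomorphism from G into the group S_∞ of all bijections of ℕ, equipped with the topology of pointwise convergence (ℕ being discrete), which is a homeomorphism onto its image. -/

import Mathlib

open Topology Filter

/-- `Equiv.permCongr` as a `MulEquiv`. -/
def permCongrMulEquiv {α β : Type*} (e : α ≃ β) : Equiv.Perm α ≃* Equiv.Perm β :=
  { e.permCongr with
    map_mul' := fun p q => by
      ext x
      simp [Equiv.permCongr_apply, Equiv.Perm.mul_apply] }

/-- In a product of discrete spaces, every neighbourhood of a point contains a finite cylinder. -/
lemma pi_discrete_nhds_basis {f : ℕ → ℕ} {s : Set (ℕ → ℕ)} (hs : s ∈ nhds f) :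
    ∃ F : Finset ℕ, {g : ℕ → ℕ | ∀ i ∈ F, g i = f i} ⊆ s := by
  rw [nhds_pi, Filter.mem_pi'] at hs
  obtain ⟨I, t, ht, hsub⟩ := hs
  refine ⟨I, fun g hg => hsub fun i hi => ?_⟩
  have h1 := ht i
  rw [nhds_discrete, Filter.mem_pure] at h1
  have h2 : g i = f i := hg i hi
  rw [h2]; exact h1

/-- A finite cylinder around a point is a neighbourhood in a discrete product. -/
lemma cylinder_mem_nhds (f : ℕ → ℕ) (F : Finset ℕ) :
    {g : ℕ → ℕ | ∀ i ∈ F, g i = f i} ∈ nhds f := by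
  have heq : {g : ℕ → ℕ | ∀ i ∈ F, g i = f i} = ⋂ i ∈ F, (fun g : ℕ → ℕ => g i) ⁻¹' {f i} := by
    ext g; simp [Set.mem_iInter]
  rw [heq]
  have hopen : IsOpen (⋂ i ∈ F, (fun g : ℕ → ℕ => g i) ⁻¹' {f i}) :=
    isOpen_biInter_finset fun i _ => (continuous_apply i).isOpen_preimage _ (isOpen_discrete _)
  exact hopen.mem_nhds (by simp [Set.mem_iInter])

section Backward

variable {G : Type} [Group G] [TopologicalSpace G] [IsTopologicalGroup G]

/-- If `G` maps into `Perm ℕ` in a way inducing its topology from pointwise convergence,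
then `G` has a neighbourhood basis at `1` of open subgroups. -/
lemma aux_backward (φ : G →* Equiv.Perm ℕ)
    (h : Topology.IsInducing (fun g => (⇑(φ g) : ℕ → ℕ))) :
    ∀ U ∈ nhds (1 : G), ∃ H : Subgroup G, IsOpen (H : Set G) ∧ (H : Set G) ⊆ U := by
  intro U hU
  have hU' : U ∈ Filter.comap (fun g => (⇑(φ g) : ℕ → ℕ)) (nhds (⇑(φ 1))) := by
    rw [← h.nhds_eq_comap]; exact hU
  obtain ⟨u, hu, hsub⟩ := Filter.mem_comap.mp hU'
  obtain ⟨F, hF⟩ := pi_discrete_nhds_basis hu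
  refine ⟨{ carrier := {g : G | ∀ i ∈ F, φ g i = i}
            one_mem' := by simp
            mul_mem' := by
              intro a b ha hb i hi
              simp only [map_mul, Equiv.Perm.mul_apply, hb i hi, ha i hi]
            inv_mem' := by
              intro a ha i hi
              simp only [map_inv, Set.mem_setOf_eq] at *
              exact (Equiv.symm_apply_eq _).mpr (ha i hi).symm }, ?_, ?_⟩
  · have heq : ({g : G | ∀ i ∈ F, φ g i = i} : Set G)
        = ⋂ i ∈ F, (fun g : G => φ g i) ⁻¹' {i} := by
      ext g; simp [Set.mem_iInter]
    show IsOpen ({g : G | ∀ i ∈ F, φ g i = i} : Set G)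
    rw [heq]
    exact isOpen_biInter_finset fun i _ =>
      ((continuous_apply i).comp h.continuous).isOpen_preimage _ (isOpen_discrete _)
  · intro g hg
    refine hsub ?_
    have : (⇑(φ g) : ℕ → ℕ) ∈ {f : ℕ → ℕ | ∀ i ∈ F, f i = (⇑(φ 1)) i} := by
      intro i hi
      simp only [map_one, Equiv.Perm.coe_one, id_eq]
      exact hg i hi
    exact hF this

end Backward

section Forward

variable {G : Type} [Group G] [TopologicalSpace G] [IsTopologicalGroup G] [PolishSpace G]

lemma aux_forward
    (hNA : ∀ U ∈ nhds (1 : G), ∃ H : Subgroup G, IsOpen (H : Set G) ∧ (H : Set G) ⊆ U) :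
    ∃ φ : G →* Equiv.Perm ℕ, Function.Injective ⇑φ ∧
      Topology.IsInducing (fun g => (⇑(φ g) : ℕ → ℕ)) := by
  letI := TopologicalSpace.upgradeIsCompletelyMetrizable G
  obtain ⟨b, hb⟩ := (nhds (1 : G)).exists_antitone_basis
  choose H hHopen hHsub using fun n => hNA (b n) (hb.mem n)
  -- countability of the coset spaces
  haveI hdisc : ∀ n, DiscreteTopology (G ⧸ H n) := fun n =>
    QuotientGroup.discreteTopology (N := H n) (hHopen n)
  haveI hcnt : ∀ n, Countable (G ⧸ H n) := fun n =>
    TopologicalSpace.separableSpace_iff_countable.mp inferInstance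
  haveI : Countable (Σ n : ℕ, G ⧸ H n) := inferInstance
  haveI : Infinite (Σ n : ℕ, G ⧸ H n) :=
    Infinite.of_injective (fun n : ℕ => (⟨n, (1 : G) ⟩ : Σ n : ℕ, G ⧸ H n))
      (fun a b hab => congrArg Sigma.fst hab)
  obtain ⟨d⟩ := nonempty_denumerable (Σ n : ℕ, G ⧸ H n)
  let e : (Σ n : ℕ, G ⧸ H n) ≃ ℕ := @Denumerable.eqv _ d
  -- the action homomorphism
  let ψ : G →* Equiv.Perm (Σ n : ℕ, G ⧸ H n) :=
    (Equiv.Perm.sigmaCongrRightHom (fun n : ℕ => G ⧸ H n)).comp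
      (Pi.monoidHom fun n => MulAction.toPermHom G (G ⧸ H n))
  have hψ : ∀ (g : G) (n : ℕ) (q : G ⧸ H n), ψ g ⟨n, q⟩ = ⟨n, g • q⟩ := fun g n q => rfl
  refine ⟨((permCongrMulEquiv e).toMonoidHom).comp ψ, ?_, ?_⟩
  · -- injectivity
    refine (injective_iff_map_eq_one _).mpr fun g hg => ?_
    have hψ1 : ψ g = 1 := (permCongrMulEquiv e).injective (by
      simpa using hg)
    have hmem : ∀ n, g ∈ H n := by
      intro n
      have h2 : ψ g ⟨n, ((1 : G) : G ⧸ H n)⟩ = ⟨n, ((1 : G) : G ⧸ H n)⟩ := by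
        rw [hψ1]; rfl
      rw [hψ g n _] at h2
      have h3 : g • ((1 : G) : G ⧸ H n) = ((1 : G) : G ⧸ H n) :=
        eq_of_heq (Sigma.mk.inj_iff.mp h2).2
      rw [MulAction.Quotient.smul_mk] at h3
      have h4 : g⁻¹ * 1 ∈ H n := QuotientGroup.eq.mp (by simpa using h3)
      simpa using (H n).inv_mem_iff.mp (by simpa using h4)
    by_contra hg1
    have hc : ({g}ᶜ : Set G) ∈ nhds (1 : G) := compl_singleton_mem_nhds (Ne.symm hg1)
    obtain ⟨n, -, hn⟩ := hb.1.mem_iff.mp hc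
    exact (hn (hHsub n (hmem n))) rfl
  · -- inducing
    set φ' := ((permCongrMulEquiv e).toMonoidHom).comp ψ with hφ'
    have hcont : Continuous (fun g : G => (⇑(φ' g) : ℕ → ℕ)) := by
      refine continuous_pi fun i => ?_
      rcases hsx : e.symm i with ⟨n, q⟩
      have hco : (fun g : G => (⇑(φ' g) : ℕ → ℕ) i)
          = (fun q' : G ⧸ H n => e ⟨n, q'⟩) ∘ (fun g : G => g • q) := by
        funext g
        show e (ψ g (e.symm i)) = e ⟨n, g • q⟩
        rw [hsx, hψ]
      rw [hco]
      exact continuous_of_discreteTopology.comp (continuous_id.smul continuous_const)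
    rw [Topology.isInducing_iff_nhds]
    intro g
    refine le_antisymm ((hcont.tendsto g).le_comap) ?_
    intro s hs
    have htr : Filter.Tendsto (fun h : G => g * h) (nhds 1) (nhds g) := by
      simpa using (continuous_mul_left g).tendsto 1
    have hs' : (fun h : G => g * h) ⁻¹' s ∈ nhds (1 : G) := htr hs
    obtain ⟨n, -, hn⟩ := hb.1.mem_iff.mp hs'
    refine Filter.mem_comap.mpr
      ⟨{f : ℕ → ℕ | ∀ i ∈ ({e ⟨n, ((1 : G) : G ⧸ H n)⟩} : Finset ℕ),
          f i = (⇑(φ' g) : ℕ → ℕ) i}, cylinder_mem_nhds _ _, ?_⟩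
    · intro h hh
      have hh' : e (ψ h (e.symm (e ⟨n, ((1 : G) : G ⧸ H n)⟩)))
          = e (ψ g (e.symm (e ⟨n, ((1 : G) : G ⧸ H n)⟩))) := hh _ (Finset.mem_singleton_self _)
      rw [e.symm_apply_apply, hψ, hψ] at hh'
      have h2 : (⟨n, h • ((1 : G) : G ⧸ H n)⟩ : Σ n : ℕ, G ⧸ H n)
          = ⟨n, g • ((1 : G) : G ⧸ H n)⟩ := e.injective hh'
      have h3 : h • ((1 : G) : G ⧸ H n) = g • ((1 : G) : G ⧸ H n) :=
        eq_of_heq (Sigma.mk.inj_iff.mp h2).2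
      rw [MulAction.Quotient.smul_mk, MulAction.Quotient.smul_mk] at h3
      have h4 : h⁻¹ * g ∈ H n := QuotientGroup.eq.mp (by simpa using h3)
      have h5 : g⁻¹ * h ∈ H n := by
        have := (H n).inv_mem h4; simpa [mul_inv_rev] using this
      have h6 : g * (g⁻¹ * h) ∈ s := hn (hHsub n h5)
      simpa using h6

end Forward

/-- A Polish group `G` is non-archimedean (it has a neighbourhood base at the
identity consisting of open subgroups) iff there exists an injective group homomorphism from
`G` into the group `S_∞` of all bijections of `ℕ`, with the topology of pointwise convergence,
which is a homeomorphism onto its image (i.e. a topological embedding). -/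
theorem stmt_7 (G : Type) [Group G] [TopologicalSpace G] [IsTopologicalGroup G] [PolishSpace G] :
    letI : TopologicalSpace (Equiv.Perm ℕ) :=
      TopologicalSpace.induced (fun σ : Equiv.Perm ℕ => (σ : ℕ → ℕ)) Pi.topologicalSpace
    ((∀ U ∈ nhds (1 : G), ∃ H : Subgroup G, IsOpen (H : Set G) ∧ (H : Set G) ⊆ U) ↔
      ∃ φ : G →* Equiv.Perm ℕ, Function.Injective ⇑φ ∧ Topology.IsEmbedding ⇑φ) := by
  letI t : TopologicalSpace (Equiv.Perm ℕ) :=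
    TopologicalSpace.induced (fun σ : Equiv.Perm ℕ => (σ : ℕ → ℕ)) Pi.topologicalSpace
  show (∀ U ∈ nhds (1 : G), ∃ H : Subgroup G, IsOpen (H : Set G) ∧ (H : Set G) ⊆ U) ↔
      ∃ φ : G →* Equiv.Perm ℕ, Function.Injective ⇑φ ∧ Topology.IsEmbedding ⇑φ
  constructor
  · intro hNA
    obtain ⟨φ, hinj, hind⟩ := aux_forward hNA
    refine ⟨φ, hinj, ⟨⟨?_⟩, hinj⟩⟩
    rw [induced_compose]
    exact hind.eq_induced
  · rintro ⟨φ, _, hemb⟩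
    exact aux_backward φ ⟨hemb.toIsInducing.eq_induced.trans induced_compose⟩
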